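/- arXiv:2209.02013 — 3 statements merged into one kernel-verified Lean document; each statement's English description precedes it below -/
import Mathlib

section
/- Let P_n ⊆ [0,1)^s with n = b^m points and k ∈ ℕ^s with |k| ≤ m. Then P_n is k-equidistributed in base b if and only if C_b(k; P_n) = b^{|k|}(b^{m-|k|} - 1)/(b^m - 1), where C_b(k; P_n) = b^{|k|} M_b(k; P_n) / (n(n-1)). -/
/-- `M_b(k; P_n)`: the number of ordered pairs of distinct points lying in a common
elementary `k`-interval. -/
noncomputable def Mcount (b : ℕ) {s n : ℕ} (k : Fin s → ℕ) (U : Fin n → Fin s → ℝ) : ℕ :=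
  ((Finset.univ : Finset (Fin n × Fin n)).filter (fun p => p.1 ≠ p.2 ∧
    ∀ ℓ, ⌊(b:ℝ)^(k ℓ) * U p.1 ℓ⌋ = ⌊(b:ℝ)^(k ℓ) * U p.2 ℓ⌋)).card

/-- `C_b(k; P_n) = b^{|k|} M_b(k; P_n) / (n(n-1))`. -/
noncomputable def Cval (b : ℕ) {s n : ℕ} (k : Fin s → ℕ) (U : Fin n → Fin s → ℝ) : ℝ :=
  (b:ℝ)^(∑ ℓ, k ℓ) * (Mcount b k U) / ((n:ℝ) * ((n:ℝ) - 1))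

/-- Membership of an elementary interval is the same as a floor condition. -/
lemma mem_Ico_iff_floor {b : ℕ} (hb : 0 < b) (kk a : ℕ) (x : ℝ) :
    x ∈ Set.Ico ((a:ℝ)/(b:ℝ)^kk) (((a:ℝ)+1)/(b:ℝ)^kk) ↔ ⌊(b:ℝ)^kk * x⌋ = (a:ℤ) := by
  have hbp : (0:ℝ) < (b:ℝ)^kk := by positivity
  rw [Set.mem_Ico, Int.floor_eq_iff, div_le_iff₀ hbp, lt_div_iff₀ hbp]
  push_cast
  constructor <;> rintro ⟨h1, h2⟩ <;> constructor <;> nlinarith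

open scoped Classical in
/-- A set of `n = b^m` points in `[0,1)^s` with `|k| ≤ m` is `k`-equidistributed iff
`C_b(k; P_n) = b^{|k|}(b^{m-|k|} - 1)/(b^m - 1)`. -/
theorem stmt5 (b s m : ℕ) (hb : 2 ≤ b) (hm : 1 ≤ m) (k : Fin s → ℕ)
    (hk : ∑ ℓ, k ℓ ≤ m)
    (U : Fin (b^m) → Fin s → ℝ) (hU : ∀ i ℓ, U i ℓ ∈ Set.Ico (0:ℝ) 1) :
    (∀ a : Fin s → ℕ, (∀ ℓ, a ℓ < b ^ k ℓ) →
      (Finset.univ.filter (fun i : Fin (b^m) => ∀ ℓ, U i ℓ ∈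
        Set.Ico ((a ℓ : ℝ)/(b:ℝ)^(k ℓ)) (((a ℓ : ℝ)+1)/(b:ℝ)^(k ℓ)))).card
        = b ^ (m - ∑ ℓ, k ℓ)) ↔
      Cval b k U = (b:ℝ)^(∑ ℓ, k ℓ) * ((b:ℝ)^(m - ∑ ℓ, k ℓ) - 1) / ((b:ℝ)^m - 1) := by
  classical
  set K := ∑ ℓ, k ℓ with hKdef
  set E := b ^ (m - K) with hEdef
  have hbpos : 0 < b := by omega
  have hKE : b ^ K * E = b ^ m := by
    rw [hEdef, ← pow_add]
    congr 1
    omega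
  have hn2 : 2 ≤ b ^ m := by
    have h1 : b ^ 1 ≤ b ^ m := Nat.pow_le_pow_right (by omega) hm
    have h2 : 2 ≤ b ^ 1 := by simpa using hb
    omega
  have hE1 : 1 ≤ E := Nat.one_le_pow _ _ hbpos
  -- the cell map
  set c : Fin (b ^ m) → Fin s → ℕ := fun i ℓ => (⌊(b:ℝ)^(k ℓ) * U i ℓ⌋).toNat with hcdef
  have hflnn : ∀ i ℓ, (0:ℤ) ≤ ⌊(b:ℝ)^(k ℓ) * U i ℓ⌋ := by
    intro i ℓ
    apply Int.floor_nonneg.2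
    have h0 := (hU i ℓ).1
    have hbp : (0:ℝ) ≤ (b:ℝ)^(k ℓ) := by positivity
    exact mul_nonneg hbp h0
  have hcast : ∀ i ℓ, ⌊(b:ℝ)^(k ℓ) * U i ℓ⌋ = (c i ℓ : ℤ) := by
    intro i ℓ; exact (Int.toNat_of_nonneg (hflnn i ℓ)).symm
  have hclt : ∀ i ℓ, c i ℓ < b ^ k ℓ := by
    intro i ℓ
    have hbp : (0:ℝ) < (b:ℝ)^(k ℓ) := by positivity
    have h2 := (hU i ℓ).2
    have h1 : (b:ℝ)^(k ℓ) * U i ℓ < ((b ^ k ℓ : ℕ) : ℝ) := by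
      push_cast
      nlinarith
    have h3 : ⌊(b:ℝ)^(k ℓ) * U i ℓ⌋ < ((b ^ k ℓ : ℕ) : ℤ) := Int.floor_lt.2 (by exact_mod_cast h1)
    rw [hcast i ℓ] at h3
    exact_mod_cast h3
  set S : Finset (Fin s → ℕ) := Fintype.piFinset (fun ℓ => Finset.range (b ^ k ℓ)) with hSdef
  have hmemS : ∀ i, c i ∈ S := by
    intro i
    simp only [hSdef, Fintype.mem_piFinset, Finset.mem_range]
    exact hclt i
  have hScard : S.card = b ^ K := by
    rw [hSdef, Fintype.card_piFinset]
    simp only [Finset.card_range]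
    rw [Finset.prod_pow_eq_pow_sum]
  set N : (Fin s → ℕ) → ℕ := fun a => (Finset.univ.filter (fun i => c i = a)).card with hNdef
  have hsumN : ∑ a ∈ S, N a = b ^ m := by
    have h := Finset.card_eq_sum_card_fiberwise
      (fun i (_ : i ∈ (Finset.univ : Finset (Fin (b ^ m)))) => hmemS i)
    simpa [hNdef] using h.symm
  -- Mcount in terms of fiber counts
  have hMsum : Mcount b k U + b ^ m = ∑ a ∈ S, N a * N a := by
    set T : Finset (Fin (b ^ m) × Fin (b ^ m)) :=
      Finset.univ.filter (fun p => c p.1 = c p.2) with hTdef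
    have hTcard : T.card = ∑ a ∈ S, N a * N a := by
      rw [Finset.card_eq_sum_card_fiberwise (f := fun p => c p.1) (t := S)
        (fun p _ => hmemS p.1)]
      refine Finset.sum_congr rfl (fun a _ => ?_)
      have hEq : T.filter (fun p => c p.1 = a)
          = (Finset.univ.filter (fun i => c i = a)) ×ˢ (Finset.univ.filter (fun i => c i = a)) := by
        ext p
        simp only [hTdef, Finset.mem_filter, Finset.mem_univ, true_and, Finset.mem_product]
        constructor
        · rintro ⟨h1, h2⟩; exact ⟨h2, h2 ▸ h1.symm⟩
        · rintro ⟨h1, h2⟩; exact ⟨h1.trans h2.symm, h1⟩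
      rw [hEq, Finset.card_product]
    have hdiag : T.filter (fun p => p.1 = p.2) = (Finset.univ : Finset (Fin (b ^ m))).diag := by
      ext p
      simp only [hTdef, Finset.mem_filter, Finset.mem_univ, true_and, Finset.mem_diag]
      exact ⟨fun h => h.2, fun h => ⟨by rw [h], h⟩⟩
    have hdiagcard : (T.filter (fun p => p.1 = p.2)).card = b ^ m := by
      rw [hdiag, Finset.diag_card]
      simp
    have hMceq : Mcount b k U = (T.filter (fun p => ¬ p.1 = p.2)).card := by
      rw [Mcount]
      congr 1
      ext p
      simp only [hTdef, Finset.mem_filter, Finset.mem_univ, true_and, ne_eq]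
      constructor
      · rintro ⟨h1, h2⟩
        refine ⟨funext fun ℓ => ?_, h1⟩
        have h3 := h2 ℓ
        rw [hcast, hcast] at h3
        exact_mod_cast h3
      · rintro ⟨h1, h2⟩
        exact ⟨h2, fun ℓ => by rw [hcast, hcast, h1]⟩
    have hsplit := Finset.card_filter_add_card_filter_not
      (s := T) (p := fun p : Fin (b ^ m) × Fin (b ^ m) => p.1 = p.2)
    rw [hMceq]
    omega
  -- combinatorial equivalence
  have hMeq_iff : (∀ a ∈ S, N a = E) ↔ Mcount b k U = b ^ m * (E - 1) := by
    have hnE : b ^ m * (E - 1) + b ^ m = b ^ m * E := by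
      have h := Nat.sub_add_cancel hE1
      calc b ^ m * (E - 1) + b ^ m = b ^ m * ((E - 1) + 1) := by ring
        _ = b ^ m * E := by rw [h]
    constructor
    · intro h
      have hsq : ∑ a ∈ S, N a * N a = b ^ K * (E * E) := by
        rw [Finset.sum_congr rfl (fun a ha => by rw [h a ha]), Finset.sum_const, hScard,
          smul_eq_mul]
      have h2 : Mcount b k U + b ^ m = b ^ m * E := by
        rw [hMsum, hsq, ← hKE]; ring
      omega
    · intro h
      have hsq : ∑ a ∈ S, N a * N a = b ^ m * E := by omega
      have e1 : ∑ a ∈ S, ((N a : ℤ))^2 = (b:ℤ) ^ m * E := by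
        have h' := congrArg (Nat.cast : ℕ → ℤ) hsq
        push_cast at h'
        simpa [sq] using h'
      have e2 : ∑ a ∈ S, (N a : ℤ) = (b:ℤ) ^ m := by
        have h' := congrArg (Nat.cast : ℕ → ℤ) hsumN
        push_cast at h'
        simpa using h'
      have e3 : ((b:ℤ))^K * (E:ℤ) = (b:ℤ) ^ m := by exact_mod_cast hKE
      have hzero : ∑ a ∈ S, ((N a : ℤ) - E)^2 = 0 := by
        have expand : ∀ a, ((N a : ℤ) - E)^2 = (N a : ℤ)^2 - 2*(E:ℤ)*(N a : ℤ) + (E:ℤ)^2 :=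
          fun a => by ring
        rw [Finset.sum_congr rfl fun a _ => expand a, Finset.sum_add_distrib,
          Finset.sum_sub_distrib, ← Finset.mul_sum, e1, e2, Finset.sum_const, nsmul_eq_mul,
          hScard]
        push_cast
        linear_combination (E:ℤ) * e3
      have hall := (Finset.sum_eq_zero_iff_of_nonneg
        (fun a _ => sq_nonneg ((N a : ℤ) - E))).1 hzero
      intro a ha
      have h5 : (N a : ℤ) - E = 0 := by
        have := hall a ha
        exact pow_eq_zero_iff (by norm_num) |>.1 this
      have h6 : (N a : ℤ) = (E : ℤ) := by linarith
      exact_mod_cast h6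
  -- translation of the LHS
  have hLHS : (∀ a : Fin s → ℕ, (∀ ℓ, a ℓ < b ^ k ℓ) →
      (Finset.univ.filter (fun i : Fin (b ^ m) => ∀ ℓ, U i ℓ ∈
        Set.Ico ((a ℓ : ℝ)/(b:ℝ)^(k ℓ)) (((a ℓ : ℝ)+1)/(b:ℝ)^(k ℓ)))).card = E)
      ↔ ∀ a ∈ S, N a = E := by
    have hfib : ∀ a : Fin s → ℕ,
        (Finset.univ.filter (fun i : Fin (b ^ m) => ∀ ℓ, U i ℓ ∈
          Set.Ico ((a ℓ : ℝ)/(b:ℝ)^(k ℓ)) (((a ℓ : ℝ)+1)/(b:ℝ)^(k ℓ)))).card = N a := by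
      intro a
      rw [hNdef]
      congr 1
      ext i
      simp only [Finset.mem_filter, Finset.mem_univ, true_and]
      constructor
      · intro h
        funext ℓ
        have h1 := (mem_Ico_iff_floor hbpos (k ℓ) (a ℓ) (U i ℓ)).1 (h ℓ)
        rw [hcast] at h1
        exact_mod_cast h1
      · intro h ℓ
        refine (mem_Ico_iff_floor hbpos (k ℓ) (a ℓ) (U i ℓ)).2 ?_
        rw [hcast, h]
    have hSmem : ∀ a : Fin s → ℕ, a ∈ S ↔ ∀ ℓ, a ℓ < b ^ k ℓ := by
      intro a
      simp [hSdef, Fintype.mem_piFinset, Finset.mem_range]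
    constructor
    · intro h a ha
      rw [← hfib a]
      exact h a ((hSmem a).1 ha)
    · intro h a ha
      rw [hfib a]
      exact h a ((hSmem a).2 ha)
  -- real-number equivalence
  have hnR : ((b ^ m : ℕ) : ℝ) = (b:ℝ)^m := by push_cast; ring
  have hER : ((E : ℕ) : ℝ) = (b:ℝ)^(m - K) := by rw [hEdef]; push_cast; ring
  have h2R : (2:ℝ) ≤ ((b ^ m : ℕ) : ℝ) := by exact_mod_cast hn2
  have hd1 : (((b ^ m : ℕ) : ℝ) * (((b ^ m : ℕ) : ℝ) - 1)) ≠ 0 := by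
    have : (0:ℝ) < ((b ^ m : ℕ) : ℝ) * (((b ^ m : ℕ) : ℝ) - 1) := by nlinarith
    exact ne_of_gt this
  have hd2 : (b:ℝ)^m - 1 ≠ 0 := by
    rw [← hnR]
    have : (0:ℝ) < ((b ^ m : ℕ) : ℝ) - 1 := by linarith
    exact ne_of_gt this
  have hkey : (Cval b k U = (b:ℝ)^K * ((b:ℝ)^(m - K) - 1) / ((b:ℝ)^m - 1)) ↔
      (Mcount b k U : ℝ) = ((b ^ m : ℕ) : ℝ) * ((E:ℝ) - 1) := by
    unfold Cval
    rw [← hKdef, div_eq_div_iff hd1 hd2, ← hnR, ← hER]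
    constructor
    · intro h
      have hbK : ((b:ℝ)^K) * (((b ^ m : ℕ) : ℝ) - 1) ≠ 0 := by
        have h1 : (0:ℝ) < (b:ℝ)^K := by positivity
        have hx : (0:ℝ) < ((b ^ m : ℕ) : ℝ) - 1 := by linarith
        exact ne_of_gt (by nlinarith)
      have h2 : ((b:ℝ)^K * (((b ^ m : ℕ) : ℝ) - 1)) * (Mcount b k U : ℝ)
          = ((b:ℝ)^K * (((b ^ m : ℕ) : ℝ) - 1)) * (((b ^ m : ℕ) : ℝ) * ((E:ℝ) - 1)) := by
        linear_combination h
      exact mul_left_cancel₀ hbK h2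
    · intro h
      rw [h]
      ring
  have hnat : (Mcount b k U : ℝ) = ((b ^ m : ℕ) : ℝ) * ((E:ℝ) - 1) ↔
      Mcount b k U = b ^ m * (E - 1) := by
    have hc : ((b ^ m * (E - 1) : ℕ) : ℝ) = ((b ^ m : ℕ) : ℝ) * ((E:ℝ) - 1) := by
      rw [Nat.cast_mul, Nat.cast_sub hE1, Nat.cast_one]
    rw [← hc]
    exact Nat.cast_inj
  exact hLHS.trans (hMeq_iff.trans (hnat.symm.trans hkey.symm))
end

section
/- If P_n is a (0,m,s)-net in base b (n = b^m), then for every k ∈ ℕ^s, C_b(k; P_n) = b^{|k|} · max(b^{m-|k|} - 1, 0) / (b^m - 1). In particular C_b(k; P_n) ≤ 1 for all k, i.e., P_n is completely quasi-equidistributed in base b. -/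
open Finset

private lemma floorDivNatAux (a : ℝ) (n : ℕ) (hn : 0 < n) :
    ⌊a / (n:ℝ)⌋ = ⌊a⌋ / (n:ℤ) := by
  have hn' : (0:ℝ) < (n:ℝ) := by exact_mod_cast hn
  have hnz : (0:ℤ) < (n:ℤ) := by exact_mod_cast hn
  have hmod := Int.emod_add_mul_ediv ⌊a⌋ (n:ℤ)
  have h1 : 0 ≤ ⌊a⌋ % (n:ℤ) := Int.emod_nonneg _ (by omega)
  have h2 : ⌊a⌋ % (n:ℤ) < (n:ℤ) := Int.emod_lt_of_pos _ hnz
  have hfl : ((⌊a⌋:ℤ):ℝ) ≤ a := Int.floor_le a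
  have hfu : a < (⌊a⌋:ℝ) + 1 := Int.lt_floor_add_one a
  set c : ℤ := ⌊a⌋ / (n:ℤ) with hc
  have hexp : (n:ℤ) * (c + 1) = (n:ℤ) * c + n := by ring
  have hkey1 : (n:ℤ) * c ≤ ⌊a⌋ := by omega
  have hkey2 : ⌊a⌋ + 1 ≤ (n:ℤ) * (c + 1) := by omega
  have hkey1' : (n:ℝ) * (c:ℝ) ≤ (⌊a⌋:ℝ) := by exact_mod_cast hkey1
  have hkey2' : ((⌊a⌋:ℤ):ℝ) + 1 ≤ (n:ℝ) * ((c:ℝ) + 1) := by exact_mod_cast hkey2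
  rw [Int.floor_eq_iff]
  constructor
  · rw [le_div_iff₀ hn']; nlinarith
  · rw [div_lt_iff₀ hn']; nlinarith

private lemma existsLeSum {s : ℕ} (f : Fin s → ℕ) (m : ℕ) (h : m ≤ ∑ ℓ, f ℓ) :
    ∃ g : Fin s → ℕ, (∀ ℓ, g ℓ ≤ f ℓ) ∧ ∑ ℓ, g ℓ = m := by
  classical
  suffices H : ∀ (t : Finset (Fin s)) (m : ℕ), m ≤ ∑ ℓ ∈ t, f ℓ →
      ∃ g : Fin s → ℕ, (∀ ℓ, g ℓ ≤ f ℓ) ∧ ∑ ℓ ∈ t, g ℓ = m from H univ m h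
  intro t
  induction t using Finset.induction_on with
  | empty =>
      intro m hm
      simp only [Finset.sum_empty, Nat.le_zero] at hm
      exact ⟨fun _ => 0, fun _ => Nat.zero_le _, by simp [hm]⟩
  | @insert a t ha ih =>
      intro m hm
      rw [Finset.sum_insert ha] at hm
      by_cases hc : m ≤ ∑ ℓ ∈ t, f ℓ
      · obtain ⟨g, hg1, hg2⟩ := ih m hc
        refine ⟨Function.update g a 0, fun ℓ => ?_, ?_⟩
        · rcases eq_or_ne ℓ a with rfl | hℓ
          · simp
          · simp [Function.update_of_ne hℓ, hg1 ℓ]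
        · have hsum : ∑ x ∈ t, Function.update g a 0 x = ∑ x ∈ t, g x :=
            Finset.sum_congr rfl fun x hx => Function.update_of_ne (ne_of_mem_of_not_mem hx ha) _ _
          rw [Finset.sum_insert ha, Function.update_self, hsum, hg2, Nat.zero_add]
      · refine ⟨Function.update f a (m - ∑ ℓ ∈ t, f ℓ), fun ℓ => ?_, ?_⟩
        · rcases eq_or_ne ℓ a with rfl | hℓ
          · simp only [Function.update_self]; omega
          · simp [Function.update_of_ne hℓ]
        · have hsum : ∑ x ∈ t, Function.update f a (m - ∑ ℓ ∈ t, f ℓ) x = ∑ x ∈ t, f x :=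
            Finset.sum_congr rfl fun x hx => Function.update_of_ne (ne_of_mem_of_not_mem hx ha) _ _
          rw [Finset.sum_insert ha, Function.update_self, hsum]
          omega

open scoped Classical in
/-- If `P_n` is a `(0,m,s)`-net in base `b` then for every `k`,
`C_b(k; P_n) = b^{|k|} · max(b^{m-|k|} - 1, 0) / (b^m - 1)`, and in particular
`C_b(k; P_n) ≤ 1` for all `k` (complete quasi-equidistribution). -/
theorem stmt6 (b s m : ℕ) (hb : 2 ≤ b) (hm : 1 ≤ m)
    (U : Fin (b^m) → Fin s → ℝ) (hU : ∀ i ℓ, U i ℓ ∈ Set.Ico (0:ℝ) 1)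
    (hnet : ∀ k : Fin s → ℕ, ∑ ℓ, k ℓ ≤ m → ∀ a : Fin s → ℕ, (∀ ℓ, a ℓ < b ^ k ℓ) →
      (Finset.univ.filter (fun i : Fin (b^m) => ∀ ℓ, U i ℓ ∈
        Set.Ico ((a ℓ : ℝ)/(b:ℝ)^(k ℓ)) (((a ℓ : ℝ)+1)/(b:ℝ)^(k ℓ)))).card
        = b ^ (m - ∑ ℓ, k ℓ)) :
    ∀ k : Fin s → ℕ,
      Cval b k U =
        (b:ℝ)^(∑ ℓ, k ℓ) * max ((b:ℝ)^((m:ℤ) - (∑ ℓ, k ℓ : ℤ)) - 1) 0 / ((b:ℝ)^m - 1) ∧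
      Cval b k U ≤ 1 := by
  intro k
  rw [show (∑ ℓ, (k ℓ : ℤ)) = ((∑ ℓ, k ℓ : ℕ) : ℤ) by push_cast; rfl]
  set K := ∑ ℓ, k ℓ with hK
  have hb1 : (1:ℝ) < (b:ℝ) := by exact_mod_cast hb
  have hb0 : (0:ℝ) < (b:ℝ) := by linarith
  -- floor characterization of elementary interval membership
  have hflo : ∀ (k' : ℕ) (u : ℝ) (a : ℕ),
      u ∈ Set.Ico ((a:ℝ)/(b:ℝ)^k') (((a:ℝ)+1)/(b:ℝ)^k') ↔ ⌊(b:ℝ)^k' * u⌋ = (a:ℤ) := by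
    intro k' u a
    have hp : (0:ℝ) < (b:ℝ)^k' := by positivity
    rw [Set.mem_Ico, Int.floor_eq_iff, div_le_iff₀ hp, lt_div_iff₀ hp]
    push_cast
    constructor
    · rintro ⟨h1, h2⟩; exact ⟨by nlinarith, by nlinarith⟩
    · rintro ⟨h1, h2⟩; exact ⟨by nlinarith, by nlinarith⟩
  have hfnn : ∀ (k' : ℕ) (i : Fin (b^m)) (ℓ : Fin s), 0 ≤ ⌊(b:ℝ)^k' * U i ℓ⌋ := fun k' i ℓ =>
    Int.floor_nonneg.mpr (mul_nonneg (by positivity) (hU i ℓ).1)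
  have hflt : ∀ (k' : ℕ) (i : Fin (b^m)) (ℓ : Fin s), ⌊(b:ℝ)^k' * U i ℓ⌋ < (b:ℤ)^k' := by
    intro k' i ℓ
    rw [Int.floor_lt]
    push_cast
    have h1 := (hU i ℓ).2
    have h0 := (hU i ℓ).1
    have hp : (0:ℝ) < (b:ℝ)^k' := by positivity
    nlinarith
  by_cases hKm : K ≤ m
  · -- case |k| ≤ m
    set φ : Fin (b^m) → Fin s → ℕ := fun i ℓ => (⌊(b:ℝ)^(k ℓ) * U i ℓ⌋).toNat with hφ
    set A : Finset (Fin s → ℕ) := Fintype.piFinset fun ℓ => Finset.range (b ^ k ℓ) with hA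
    have hφA : ∀ i, φ i ∈ A := by
      intro i
      rw [hA, Fintype.mem_piFinset]
      intro ℓ
      rw [Finset.mem_range]
      have h1 := hflt (k ℓ) i ℓ
      have h2 := hfnn (k ℓ) i ℓ
      have h3 : ((b^(k ℓ) : ℕ) : ℤ) = (b:ℤ)^(k ℓ) := by push_cast; ring
      simp only [hφ]
      omega
    have hmemF : ∀ (a : Fin s → ℕ) (i : Fin (b^m)), φ i = a ↔
        (∀ ℓ, U i ℓ ∈ Set.Ico ((a ℓ : ℝ)/(b:ℝ)^(k ℓ)) (((a ℓ : ℝ)+1)/(b:ℝ)^(k ℓ))) := by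
      intro a i
      rw [funext_iff]
      constructor
      · intro h ℓ
        rw [hflo]
        have h1 := hfnn (k ℓ) i ℓ
        have h2 := h ℓ
        simp only [hφ] at h2
        omega
      · intro h ℓ
        have h2 := (hflo (k ℓ) (U i ℓ) (a ℓ)).mp (h ℓ)
        simp only [hφ]
        omega
    have hcard : ∀ a ∈ A, (Finset.univ.filter (fun i => φ i = a)).card = b^(m-K) := by
      intro a ha
      have haA : ∀ ℓ, a ℓ < b ^ k ℓ := by
        intro ℓ
        have := Fintype.mem_piFinset.mp (hA ▸ ha) ℓ
        simpa [Finset.mem_range] using this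
      rw [← hnet k hKm a haA]
      congr 1
      apply Finset.filter_congr
      intro i _
      simp only [hmemF a i]
    have hMc : Mcount b k U = b^K * (b^(m-K) * b^(m-K) - b^(m-K)) := by
      rw [Mcount]
      rw [Finset.card_eq_sum_card_fiberwise
        (f := fun p : Fin (b^m) × Fin (b^m) => φ p.1) (t := A) (fun p _ => hφA p.1)]
      have heach : ∀ a ∈ A,
          ((Finset.univ.filter (fun p : Fin (b^m) × Fin (b^m) => p.1 ≠ p.2 ∧
            ∀ ℓ, ⌊(b:ℝ)^(k ℓ) * U p.1 ℓ⌋ = ⌊(b:ℝ)^(k ℓ) * U p.2 ℓ⌋)).filter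
            (fun p => φ p.1 = a)).card = b^(m-K) * b^(m-K) - b^(m-K) := by
        intro a ha
        have hset : ((Finset.univ.filter (fun p : Fin (b^m) × Fin (b^m) => p.1 ≠ p.2 ∧
            ∀ ℓ, ⌊(b:ℝ)^(k ℓ) * U p.1 ℓ⌋ = ⌊(b:ℝ)^(k ℓ) * U p.2 ℓ⌋)).filter
            (fun p => φ p.1 = a)) = (Finset.univ.filter (fun i => φ i = a)).offDiag := by
          ext p
          simp only [Finset.mem_filter, Finset.mem_univ, true_and, Finset.mem_offDiag]
          constructor
          · rintro ⟨⟨hne, hfl⟩, h1⟩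
            refine ⟨h1, ?_, hne⟩
            rw [← h1]
            funext ℓ
            simp only [hφ]
            rw [hfl ℓ]
          · rintro ⟨h1, h2, hne⟩
            refine ⟨⟨hne, fun ℓ => ?_⟩, h1⟩
            have e1 : φ p.1 ℓ = φ p.2 ℓ := by rw [h1, h2]
            have n1 := hfnn (k ℓ) p.1 ℓ
            have n2 := hfnn (k ℓ) p.2 ℓ
            simp only [hφ] at e1
            omega
        rw [hset, Finset.offDiag_card, hcard a ha]
      rw [Finset.sum_congr rfl heach, Finset.sum_const, smul_eq_mul]
      congr 1
      rw [hA, Fintype.card_piFinset]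
      simp only [Finset.card_range]
      exact Finset.prod_pow_eq_pow_sum Finset.univ k b
    -- numeric conclusion
    have hcastm : ((b^m : ℕ) : ℝ) = (b:ℝ)^K * ((b^(m-K) : ℕ) : ℝ) := by
      push_cast
      rw [← pow_add]
      congr 1
      omega
    set x : ℝ := (b:ℝ)^K with hx
    set y : ℝ := ((b^(m-K) : ℕ) : ℝ) with hy
    have hx1 : (1:ℝ) ≤ x := by
      rw [hx]
      have : (1:ℕ) ≤ b^K := Nat.one_le_pow _ _ (by omega)
      exact_mod_cast this
    have hy1 : (1:ℝ) ≤ y := by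
      rw [hy]
      exact_mod_cast Nat.one_le_pow _ _ (by omega)
    have hxy2 : (2:ℝ) ≤ x * y := by
      rw [← hcastm]
      have : 2 ≤ b^m := by
        calc 2 = 2^1 := (pow_one 2).symm
        _ ≤ b^1 := Nat.pow_le_pow_left hb 1
        _ ≤ b^m := Nat.pow_le_pow_right (by omega) hm
      exact_mod_cast this
    have hxy1 : (0:ℝ) < x * y - 1 := by linarith
    have hpowm : (b:ℝ)^m = x * y := by rw [hx, hy, ← hcastm]; push_cast; ring
    have hmax : max ((b:ℝ)^((m:ℤ) - (K:ℤ)) - 1) 0 = y - 1 := by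
      have h1 : (b:ℝ)^((m:ℤ) - (K:ℤ)) = y := by
        rw [show (m:ℤ) - (K:ℤ) = ((m - K : ℕ) : ℤ) by omega, zpow_natCast, hy]
        push_cast; ring
      rw [h1, max_eq_left (by linarith)]
    have hcastM : ((b^K * (b^(m-K) * b^(m-K) - b^(m-K)) : ℕ) : ℝ) = x * (y * y - y) := by
      have hle : b^(m-K) ≤ b^(m-K) * b^(m-K) := Nat.le_mul_of_pos_left _ (Nat.pow_pos (by omega))
      push_cast [Nat.cast_sub hle]
      rw [hx, hy]; push_cast; ring
    have hCeq : Cval b k U = x * (y - 1) / (x * y - 1) := by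
      rw [Cval, hMc, hcastM, hcastm, ← hK, ← hx]
      field_simp
    constructor
    · rw [hCeq, hmax, hpowm]
    · rw [hCeq, div_le_one hxy1]
      nlinarith
  · -- case |k| > m
    push_neg at hKm
    have hM0 : Mcount b k U = 0 := by
      rw [Mcount, Finset.card_eq_zero, Finset.filter_eq_empty_iff]
      intro p _
      rintro ⟨hne, hfl⟩
      obtain ⟨k', hk'le, hk'sum⟩ := existsLeSum k m (le_of_lt hKm)
      set a : Fin s → ℕ := fun ℓ => (⌊(b:ℝ)^(k' ℓ) * U p.1 ℓ⌋).toNat with hadef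
      have ha : ∀ ℓ, a ℓ < b ^ k' ℓ := by
        intro ℓ
        have h1 := hflt (k' ℓ) p.1 ℓ
        have h2 := hfnn (k' ℓ) p.1 ℓ
        have h3 : ((b^(k' ℓ) : ℕ) : ℤ) = (b:ℤ)^(k' ℓ) := by push_cast; ring
        simp only [hadef]
        omega
      have hcard := hnet k' (by rw [hk'sum]) a ha
      rw [hk'sum, Nat.sub_self, pow_zero] at hcard
      have hdet : ∀ (ℓ : Fin s) (u v : ℝ), ⌊(b:ℝ)^(k ℓ) * u⌋ = ⌊(b:ℝ)^(k ℓ) * v⌋ →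
          ⌊(b:ℝ)^(k' ℓ) * u⌋ = ⌊(b:ℝ)^(k' ℓ) * v⌋ := by
        intro ℓ u v h
        have hkk := hk'le ℓ
        have hposn : 0 < b ^ (k ℓ - k' ℓ) := Nat.pow_pos (by omega)
        have hrw : ∀ w : ℝ, (b:ℝ)^(k' ℓ) * w = ((b:ℝ)^(k ℓ) * w) / ((b^(k ℓ - k' ℓ) : ℕ) : ℝ) := by
          intro w
          have hne0 : ((b^(k ℓ - k' ℓ) : ℕ) : ℝ) ≠ 0 := by positivity
          rw [eq_div_iff hne0]
          push_cast
          rw [mul_right_comm, ← pow_add]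
          congr 2
          omega
        rw [hrw u, hrw v, floorDivNatAux _ _ hposn, floorDivNatAux _ _ hposn, h]
      have h1 : p.1 ∈ Finset.univ.filter (fun i : Fin (b^m) => ∀ ℓ, U i ℓ ∈
          Set.Ico ((a ℓ : ℝ)/(b:ℝ)^(k' ℓ)) (((a ℓ : ℝ)+1)/(b:ℝ)^(k' ℓ))) := by
        rw [Finset.mem_filter]
        refine ⟨Finset.mem_univ _, fun ℓ => ?_⟩
        rw [hflo]
        have := hfnn (k' ℓ) p.1 ℓ
        simp only [hadef]
        omega
      have h2 : p.2 ∈ Finset.univ.filter (fun i : Fin (b^m) => ∀ ℓ, U i ℓ ∈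
          Set.Ico ((a ℓ : ℝ)/(b:ℝ)^(k' ℓ)) (((a ℓ : ℝ)+1)/(b:ℝ)^(k' ℓ))) := by
        rw [Finset.mem_filter]
        refine ⟨Finset.mem_univ _, fun ℓ => ?_⟩
        rw [hflo]
        rw [← hdet ℓ _ _ (hfl ℓ)]
        have := hfnn (k' ℓ) p.1 ℓ
        simp only [hadef]
        omega
      have hlt : 1 < (Finset.univ.filter (fun i : Fin (b^m) => ∀ ℓ, U i ℓ ∈
          Set.Ico ((a ℓ : ℝ)/(b:ℝ)^(k' ℓ)) (((a ℓ : ℝ)+1)/(b:ℝ)^(k' ℓ)))).card :=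
        Finset.one_lt_card.mpr ⟨p.1, h1, p.2, h2, hne⟩
      omega
    have hCv : Cval b k U = 0 := by rw [Cval, hM0]; simp
    have hmax0 : max ((b:ℝ)^((m:ℤ) - (K:ℤ)) - 1) 0 = 0 := by
      apply max_eq_right
      have hle : (b:ℝ)^((m:ℤ) - (K:ℤ)) ≤ 1 := by
        apply zpow_le_one_of_nonpos₀ (by linarith)
        omega
      linarith
    rw [hCv, hmax0]
    norm_num
end

section
/- For n consecutive points of the van der Corput sequence in base b and any k with b^k ≤ n, the one-dimensional counting number satisfies C_b(k; P_n) ≤ 1, i.e., b^k M_b(k; P_n) ≤ n(n-1), where M_b(k; P_n) counts ordered pairs of distinct points in a common interval [a/b^k, (a+1)/b^k). -/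
/-- The van der Corput sequence in base `b`. -/
noncomputable def vdc (b n : ℕ) : ℝ :=
  ∑ r ∈ Finset.range (Nat.digits b (n-1)).length,
    ((Nat.digits b (n-1)).getD r 0 : ℝ) / (b:ℝ)^(r+1)

namespace Stmt18Aux

noncomputable def F (b N : ℕ) : ℝ :=
  ∑ r ∈ Finset.range (Nat.digits b N).length,
    ((Nat.digits b N).getD r 0 : ℝ) / (b:ℝ)^(r+1)

lemma F_rec (b : ℕ) (hb : 2 ≤ b) (N : ℕ) :
    F b N = (N % b : ℕ) / (b:ℝ) + F b (N / b) / b := by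
  have hb0 : (b:ℝ) ≠ 0 := by positivity
  rcases Nat.eq_zero_or_pos N with h | h
  · subst h; simp [F]
  · rw [F, Nat.digits_def' (by omega : 1 < b) h, List.length_cons,
      Finset.sum_range_succ']
    simp only [List.getD_cons_succ, List.getD_cons_zero]
    rw [F, Finset.sum_div, add_comm]
    congr 1
    · norm_num
    · apply Finset.sum_congr rfl
      intro r _
      rw [pow_succ]
      field_simp

lemma F_nonneg (b N : ℕ) : 0 ≤ F b N := by
  apply Finset.sum_nonneg
  intro r _
  positivity

lemma F_lt_one (b : ℕ) (hb : 2 ≤ b) : ∀ N, F b N < 1 := by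
  intro N
  induction N using Nat.strong_induction_on with
  | _ N ih =>
    rcases Nat.eq_zero_or_pos N with h | h
    · subst h; simp [F]
    · have hb0 : (0:ℝ) < b := by positivity
      rw [F_rec b hb N]
      have h1 : ((N % b : ℕ) : ℝ) ≤ (b:ℝ) - 1 := by
        have hle : N % b ≤ b - 1 := by
          have := Nat.mod_lt N (show 0 < b by omega); omega
        calc ((N % b : ℕ) : ℝ) ≤ ((b-1 : ℕ) : ℝ) := by exact_mod_cast hle
          _ = (b:ℝ) - 1 := by
              rw [Nat.cast_sub (by omega : 1 ≤ b)]; norm_num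
      have h2 : F b (N / b) < 1 := ih (N / b) (Nat.div_lt_self h (by omega))
      have key : ((N % b : ℕ) : ℝ) / b + F b (N / b) / b < ((b:ℝ) - 1) / b + 1 / b := by
        have t1 : ((N % b : ℕ) : ℝ) / b ≤ ((b:ℝ) - 1) / b := by gcongr
        have t2 : F b (N / b) / b < 1 / b := by gcongr
        linarith
      have hend : ((b:ℝ) - 1) / b + 1 / b = 1 := by field_simp; ring
      linarith

def rev (b : ℕ) : ℕ → ℕ → ℕ
  | 0, _ => 0
  | (k+1), N => N % b * b ^ k + rev b k (N / b)

lemma rev_lt (b : ℕ) (hb : 2 ≤ b) : ∀ k N, rev b k N < b ^ k := by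
  intro k
  induction k with
  | zero => intro N; simp [rev]
  | succ k ih =>
    intro N
    have h1 : N % b ≤ b - 1 := by have := Nat.mod_lt N (show 0 < b by omega); omega
    have h2 := ih (N / b)
    have h3 : rev b (k+1) N ≤ (b-1) * b ^ k + rev b k (N / b) := by
      simp only [rev]; exact Nat.add_le_add_right (Nat.mul_le_mul_right _ h1) _
    have hbk : 0 < b ^ k := Nat.pow_pos (by omega)
    have h4 : (b-1) * b ^ k + b ^ k = b ^ (k+1) := by
      have e : b - 1 + 1 = b := by omega
      calc (b-1) * b ^ k + b ^ k = (b - 1 + 1) * b ^ k := by ring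
        _ = b ^ (k+1) := by rw [e, pow_succ]; ring
    omega

lemma rev_mod (b : ℕ) (hb : 2 ≤ b) : ∀ k N, rev b k N = rev b k (N % b ^ k) := by
  intro k
  induction k with
  | zero => intro N; simp [rev]
  | succ k ih =>
    intro N
    have e1 : N % b ^ (k+1) % b = N % b := by
      rw [Nat.mod_mod_of_dvd _ (dvd_pow_self b (Nat.succ_ne_zero k))]
    have e2 : N % b ^ (k+1) / b = N / b % b ^ k := by
      rw [pow_succ, mul_comm, Nat.mod_mul_right_div_self]
    simp only [rev, e1, e2]
    rw [← ih (N / b)]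

lemma rev_inj (b : ℕ) (hb : 2 ≤ b) :
    ∀ k M N, M < b ^ k → N < b ^ k → rev b k M = rev b k N → M = N := by
  intro k
  induction k with
  | zero => intro M N hM hN _; simp at hM hN; omega
  | succ k ih =>
    intro M N hM hN h
    simp only [rev] at h
    have hbk : 0 < b ^ k := Nat.pow_pos (by omega)
    have hrM := rev_lt b hb k (M / b)
    have hrN := rev_lt b hb k (N / b)
    have div_eq : ∀ P : ℕ, (P % b * b ^ k + rev b k (P / b)) / b ^ k = P % b := by
      intro P
      rw [mul_comm, Nat.mul_add_div hbk, Nat.div_eq_of_lt (rev_lt b hb k (P / b))]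
      omega
    have hmm : M % b = N % b := by
      have := congrArg (· / b ^ k) h
      simpa only [div_eq] using this
    have hrev : rev b k (M / b) = rev b k (N / b) := by
      rw [hmm] at h; omega
    have hM' : M / b < b ^ k := by
      apply Nat.div_lt_of_lt_mul
      rw [mul_comm, ← pow_succ]; exact hM
    have hN' : N / b < b ^ k := by
      apply Nat.div_lt_of_lt_mul
      rw [mul_comm, ← pow_succ]; exact hN
    have hdiv := ih (M / b) (N / b) hM' hN' hrev
    calc M = b * (M / b) + M % b := (Nat.div_add_mod M b).symm
      _ = b * (N / b) + N % b := by rw [hdiv, hmm]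
      _ = N := Nat.div_add_mod N b

lemma floor_F (b : ℕ) (hb : 2 ≤ b) : ∀ k N, ⌊(b:ℝ)^k * F b N⌋ = rev b k N := by
  intro k
  induction k with
  | zero =>
    intro N
    simp only [pow_zero, one_mul, rev, Nat.cast_zero]
    rw [Int.floor_eq_zero_iff]
    exact ⟨F_nonneg b N, F_lt_one b hb N⟩
  | succ k ih =>
    intro N
    have hb0 : (b:ℝ) ≠ 0 := by positivity
    have key : (b:ℝ)^(k+1) * F b N = ((N % b * b ^ k : ℕ) : ℝ) + (b:ℝ)^k * F b (N/b) := by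
      rw [F_rec b hb N]
      push_cast
      field_simp
      ring
    rw [key, Int.floor_natCast_add, ih (N / b)]
    simp only [rev]
    push_cast
    ring

lemma card_res_bound (m n c : ℕ) (hm : 0 < m) :
    ((Finset.range n).filter (fun x => x % m = c)).card ≤ (n-1)/m + 1 := by
  rw [← Finset.card_range ((n-1)/m + 1)]
  apply Finset.card_le_card_of_injOn (fun x => x / m)
  · intro x hx
    simp only [Finset.mem_coe, Finset.mem_filter, Finset.mem_range] at hx ⊢
    have : x / m ≤ (n-1)/m := Nat.div_le_div_right (by omega)
    omega
  · intro x hx y hy hxy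
    simp only [Finset.coe_filter, Set.mem_setOf_eq, Finset.mem_range] at hx hy
    simp only at hxy
    calc x = m * (x / m) + x % m := (Nat.div_add_mod x m).symm
      _ = m * (y / m) + y % m := by rw [hxy, hx.2, hy.2]
      _ = y := Nat.div_add_mod y m

lemma mul_sub_one' (x : ℕ) : x * x - x = x * (x - 1) := by
  cases x with
  | zero => rfl
  | succ s => simp [Nat.succ_sub_one, Nat.mul_succ, Nat.succ_mul]

end Stmt18Aux

/-- For the first `n` points of the van der Corput sequence in base `b` and `b^k ≤ n`,
`C_b(k; P_n) ≤ 1`, i.e. `b^k M_b(k; P_n) ≤ n(n-1)`. -/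
theorem stmt18 (b n k : ℕ) (hb : 2 ≤ b) (hk : b^k ≤ n) :
    b^k * ((Finset.Icc 1 n ×ˢ Finset.Icc 1 n).filter (fun p => p.1 ≠ p.2 ∧
      ⌊(b:ℝ)^k * vdc b p.1⌋ = ⌊(b:ℝ)^k * vdc b p.2⌋)).card ≤ n * (n-1) := by
  classical
  open Stmt18Aux in
  set m := b ^ k with hm_def
  have hm : 0 < m := Nat.pow_pos (by omega)
  have hn : 1 ≤ n := le_trans hm hk
  have cond_iff : ∀ i j : ℕ,
      (⌊(b:ℝ)^k * vdc b i⌋ = ⌊(b:ℝ)^k * vdc b j⌋) ↔ (i-1) % m = (j-1) % m := by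
    intro i j
    have e : ∀ i : ℕ, vdc b i = Stmt18Aux.F b (i-1) := fun _ => rfl
    rw [e i, e j, Stmt18Aux.floor_F b hb, Stmt18Aux.floor_F b hb]
    constructor
    · intro h
      have h1 := Stmt18Aux.rev_mod b hb k (i-1)
      have h2 := Stmt18Aux.rev_mod b hb k (j-1)
      exact Stmt18Aux.rev_inj b hb k _ _ (Nat.mod_lt _ hm) (Nat.mod_lt _ hm)
        (by rw [← h1, ← h2]; exact_mod_cast h)
    · intro h
      rw [Stmt18Aux.rev_mod b hb k (i-1), Stmt18Aux.rev_mod b hb k (j-1), h]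
  set S := (Finset.Icc 1 n ×ˢ Finset.Icc 1 n).filter (fun p => p.1 ≠ p.2 ∧
      ⌊(b:ℝ)^k * vdc b p.1⌋ = ⌊(b:ℝ)^k * vdc b p.2⌋) with hS
  set T := ((Finset.range n) ×ˢ (Finset.range n)).filter
      (fun p => p.1 ≠ p.2 ∧ p.1 % m = p.2 % m) with hT
  have hcard : S.card = T.card := by
    refine Finset.card_bij' (fun p _ => (p.1 - 1, p.2 - 1)) (fun p _ => (p.1 + 1, p.2 + 1))
      ?_ ?_ ?_ ?_
    · intro p hp
      simp only [hS, Finset.mem_filter, Finset.mem_product, Finset.mem_Icc] at hp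
      simp only [hT, Finset.mem_filter, Finset.mem_product, Finset.mem_range]
      refine ⟨⟨by omega, by omega⟩, by omega, ?_⟩
      exact (cond_iff p.1 p.2).1 hp.2.2
    · intro p hp
      simp only [hT, Finset.mem_filter, Finset.mem_product, Finset.mem_range] at hp
      simp only [hS, Finset.mem_filter, Finset.mem_product, Finset.mem_Icc]
      refine ⟨⟨by omega, by omega⟩, by omega, ?_⟩
      rw [cond_iff (p.1 + 1) (p.2 + 1)]
      simpa using hp.2.2
    · intro p hp
      simp only [hS, Finset.mem_filter, Finset.mem_product, Finset.mem_Icc] at hp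
      have : 1 ≤ p.1 ∧ 1 ≤ p.2 := ⟨hp.1.1.1, hp.1.2.1⟩
      ext <;> simp <;> omega
    · intro p hp
      ext <;> simp
  -- fiberwise decomposition
  have hmem : ∀ p ∈ T, p.1 % m ∈ Finset.range m := fun p _ => Finset.mem_range.2 (Nat.mod_lt _ hm)
  have hfib : T.card = ∑ c ∈ Finset.range m,
      ((Finset.range n).filter (fun x => x % m = c)).offDiag.card := by
    rw [Finset.card_eq_sum_card_fiberwise hmem]
    apply Finset.sum_congr rfl
    intro c hc
    congr 1
    ext p
    simp only [hT, Finset.mem_filter, Finset.mem_product, Finset.mem_range, Finset.mem_offDiag]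
    constructor
    · rintro ⟨⟨⟨h1, h2⟩, h3, h4⟩, h5⟩
      exact ⟨⟨h1, h5⟩, ⟨h2, by rw [← h4, h5]⟩, h3⟩
    · rintro ⟨⟨h1, h5⟩, ⟨h2, h6⟩, h3⟩
      exact ⟨⟨⟨h1, h2⟩, h3, by rw [h5, h6]⟩, h5⟩
  have hsum : ∑ c ∈ Finset.range m,
      ((Finset.range n).filter (fun x => x % m = c)).card = n := by
    rw [← Finset.card_eq_sum_card_fiberwise
      (fun x (_ : x ∈ Finset.range n) => Finset.mem_range.2 (Nat.mod_lt _ hm)),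
      Finset.card_range]
  have keybound : ∀ c : ℕ,
      m * (((Finset.range n).filter (fun x => x % m = c)).card *
        (((Finset.range n).filter (fun x => x % m = c)).card - 1)) ≤
      ((Finset.range n).filter (fun x => x % m = c)).card * (n - 1) := by
    intro c
    set nc := ((Finset.range n).filter (fun x => x % m = c)).card with hnc
    rcases Nat.eq_zero_or_pos nc with h0 | h0
    · simp [h0]
    · have hb1 := Stmt18Aux.card_res_bound m n c hm
      rw [← hnc] at hb1
      have h2 : nc - 1 ≤ (n-1)/m := by omega
      have h3 : m * (nc - 1) ≤ m * ((n-1)/m) := Nat.mul_le_mul_left m h2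
      have h4 : m * ((n-1)/m) ≤ n - 1 := by
        rw [mul_comm]; exact Nat.div_mul_le_self _ _
      calc m * (nc * (nc - 1)) = nc * (m * (nc - 1)) := by ring
        _ ≤ nc * (n - 1) := Nat.mul_le_mul_left nc (le_trans h3 h4)
  calc m * S.card = m * T.card := by rw [hcard]
    _ = ∑ c ∈ Finset.range m,
        m * (((Finset.range n).filter (fun x => x % m = c)).card *
          (((Finset.range n).filter (fun x => x % m = c)).card - 1)) := by
        rw [hfib, Finset.mul_sum]
        apply Finset.sum_congr rfl
        intro c _
        rw [Finset.offDiag_card, Stmt18Aux.mul_sub_one']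
    _ ≤ ∑ c ∈ Finset.range m,
        ((Finset.range n).filter (fun x => x % m = c)).card * (n - 1) :=
        Finset.sum_le_sum (fun c _ => keybound c)
    _ = n * (n - 1) := by rw [← Finset.sum_mul, hsum]
end
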